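/- For the linearized stochastic swing system on the complete graph with n nodes, M = ηI, D = dI, all line weights equal to γ > 0, the variance of the frequency at node i in the invariant distribution is q_{ω,ii} = [1/(2dη) − γ(n−1)/(d n(2d² + γηn))] b_i² + [γ/(d n(2d² + γηn))](tr(B̃²) − b_i²). -/

import Mathlib

open Matrix

/-- Frequency variance at node `i` of the linearized stochastic swing system on the
complete graph with uniform line weight `γ`, `M = ηI`, `D = dI`. -/
theorem stmt_8 (n : ℕ) (hn : 2 ≤ n) (η d γ : ℝ) (hη : 0 < η) (hd : 0 < d) (hγ : 0 < γ)
    (b : Fin n → ℝ) :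
    let α := d / η
    let B2 : Matrix (Fin n) (Fin n) ℝ := Matrix.diagonal fun i => (b i) ^ 2
    let J : Matrix (Fin n) (Fin n) ℝ := Matrix.of fun _ _ => 1 / (n : ℝ)
    let Qω : Matrix (Fin n) (Fin n) ℝ :=
      (1 / η ^ 2) • ((1 / (2 * α)) • B2
        + (α / (2 * α ^ 2 + γ * n / η) - 1 / (2 * α)) • (J * B2 + B2 * J)
        + (1 / α - 2 * α / (2 * α ^ 2 + γ * n / η)) • (J * B2 * J))
    ∀ i, Qω i i =
      (1 / (2 * d * η) - γ * ((n : ℝ) - 1) / (d * n * (2 * d ^ 2 + γ * η * n))) * (b i) ^ 2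
      + (γ / (d * n * (2 * d ^ 2 + γ * η * n))) * ((∑ j, (b j) ^ 2) - (b i) ^ 2) := by
  intro α B2 J Qω i
  have hn0 : (0:ℝ) < n := by positivity
  have hJB : (J * B2) i i = (1 / n) * b i ^ 2 := by
    simp [Matrix.mul_apply, B2, J, Matrix.diagonal_apply, Finset.mul_sum]
  have hBJ : (B2 * J) i i = (1 / n) * b i ^ 2 := by
    simp [Matrix.mul_apply, B2, J, Matrix.diagonal_apply]
    ring
  have hJBJ : (J * B2 * J) i i = (1 / n^2) * ∑ j, b j ^ 2 := by
    simp [Matrix.mul_apply, B2, J, Matrix.diagonal_apply, Finset.sum_mul, Finset.mul_sum]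
    exact Finset.sum_congr rfl fun j _ => by ring
  have hden : 2 * α ^ 2 + γ * n / η > 0 := by positivity
  simp only [Qω, Matrix.smul_apply, Matrix.add_apply, Matrix.diagonal_apply_eq, hJB, hBJ, hJBJ,
    smul_eq_mul, B2]
  have hd2 : (2 * d ^ 2 + γ * η * n) ≠ 0 := by positivity
  simp only [α]
  field_simp
  ring
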